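/- Let n \ge 1, S odd, w an integer, and \alpha,\beta nonnegative integers with 2\alpha+\beta \le n-2. Then \sum over x in [0,2^n) with x \equiv w (mod 2^\alpha) of e^{2\pi i S 2^\beta x^2/2^n} equals 0 if 2^\alpha \nmid w, and equals 2^\beta G(S;2^{n-\beta}) if 2^\alpha | w. -/

import Mathlib

open Finset

noncomputable def Gsum (S : ℤ) (k : ℕ) : ℂ :=
  ∑ x ∈ Finset.range k,
    Complex.exp (2 * Real.pi * Complex.I * ((S * (x : ℤ) ^ 2 : ℤ) : ℂ) / (k : ℂ))

noncomputable def Gsum2 (a b c S : ℤ) (k : ℕ) : ℂ :=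
  ∑ x ∈ Finset.range k, ∑ y ∈ Finset.range k,
    Complex.exp (2 * Real.pi * Complex.I *
      ((S * (a * (x : ℤ) ^ 2 + b * (x : ℤ) * (y : ℤ) + c * (y : ℤ) ^ 2) : ℤ) : ℂ) / (k : ℂ))

/-! ### Auxiliary lemmas -/

noncomputable def Eexp (k : ℕ) (a : ℤ) : ℂ :=
  Complex.exp (2 * Real.pi * Complex.I * (a : ℂ) / (2 : ℂ) ^ k)

lemma Eexp_add (k : ℕ) (a b : ℤ) : Eexp k (a + b) = Eexp k a * Eexp k b := by
  rw [Eexp, Eexp, Eexp, ← Complex.exp_add]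
  congr 1
  push_cast
  ring

lemma Eexp_pow_mul (k : ℕ) (b : ℤ) : Eexp k (2 ^ k * b) = 1 := by
  rw [Eexp]
  have h2 : ((2:ℂ)^k) ≠ 0 := pow_ne_zero _ two_ne_zero
  have : 2 * (Real.pi:ℂ) * Complex.I * ((2^k * b : ℤ) : ℂ) / (2:ℂ)^k
      = (b : ℂ) * (2 * Real.pi * Complex.I) := by
    push_cast; field_simp
  rw [this, Complex.exp_int_mul_two_pi_mul_I]

lemma Eexp_congr {k : ℕ} {a b : ℤ} (h : (2:ℤ)^k ∣ (a - b)) : Eexp k a = Eexp k b := by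
  obtain ⟨c, hc⟩ := h
  have : a = b + 2^k * c := by linarith
  rw [this, Eexp_add, Eexp_pow_mul, mul_one]

lemma Eexp_half (k : ℕ) (hk : 1 ≤ k) {u : ℤ} (hu : Odd u) : Eexp k (2 ^ (k-1) * u) = -1 := by
  have h2 : ((2:ℂ)^k) ≠ 0 := pow_ne_zero _ two_ne_zero
  have hk' : k = (k-1) + 1 := by omega
  have : 2 * (Real.pi:ℂ) * Complex.I * ((2^(k-1) * u : ℤ) : ℂ) / (2:ℂ)^k
      = (u : ℂ) * (Real.pi * Complex.I) := by
    rw [hk']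
    push_cast
    rw [pow_succ]
    field_simp
  rw [Eexp, this, Complex.exp_int_mul, Complex.exp_pi_mul_I, hu.neg_one_zpow]

lemma Eexp_half' (k k' : ℕ) (hk : k = k' + 1) {u : ℤ} (hu : Odd u) :
    Eexp k (2 ^ k' * u) = -1 := by
  subst hk
  simpa using Eexp_half (k'+1) (by omega) hu

lemma Eexp_pow_shift (k d : ℕ) (a : ℤ) : Eexp (k + d) (2^d * a) = Eexp k a := by
  unfold Eexp
  congr 1
  have h2 : ((2:ℂ)^k) ≠ 0 := pow_ne_zero _ two_ne_zero
  have h2' : ((2:ℂ)^d) ≠ 0 := pow_ne_zero _ two_ne_zero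
  push_cast
  rw [pow_add]
  field_simp

section
variable {M : Type*} [AddCommGroup M]

lemma sum_shift_one (g : ℕ → M) (N : ℕ) (hp : ∀ t, g (t + N) = g t) :
    ∑ t ∈ range N, g (t + 1) = ∑ t ∈ range N, g t := by
  have h1 := Finset.sum_range_succ' g N
  have h2 := Finset.sum_range_succ g N
  have h3 : g N = g 0 := by simpa using hp 0
  rw [h2, h3] at h1
  exact (add_right_cancel h1.symm)

lemma sum_shift (g : ℕ → M) (N : ℕ) (hp : ∀ t, g (t + N) = g t) (T : ℕ) :
    ∑ t ∈ range N, g (t + T) = ∑ t ∈ range N, g t := by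
  induction T with
  | zero => simp
  | succ T ih =>
    have := sum_shift_one (fun t => g (t + T)) N (fun t => by
      rw [show t + N + T = t + T + N by ring, hp])
    calc ∑ t ∈ range N, g (t + (T+1)) = ∑ t ∈ range N, g (t + 1 + T) := by
          apply Finset.sum_congr rfl; intro t _; congr 1; ring
      _ = ∑ t ∈ range N, g (t + T) := this
      _ = _ := ih

lemma sum_fold (g : ℕ → M) (P : ℕ) (hp : ∀ t, g (t + P) = g t) (Q : ℕ) :
    ∑ t ∈ range (Q * P), g t = Q • ∑ t ∈ range P, g t := by
  induction Q with
  | zero => simp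
  | succ Q ih =>
    have hQ : (Q + 1) * P = Q * P + P := by ring
    rw [hQ, Finset.sum_range_add, ih, succ_nsmul]
    congr 1
    calc ∑ t ∈ range P, g (Q * P + t) = ∑ t ∈ range P, g (t + Q * P) := by
          apply Finset.sum_congr rfl; intro t _; congr 1; ring
      _ = ∑ t ∈ range P, g t := sum_shift g P hp (Q * P)

lemma sum_range_two_mul (g : ℕ → M) (N : ℕ) :
    ∑ x ∈ range (2 * N), g x = ∑ y ∈ range N, g (2 * y) + ∑ y ∈ range N, g (2 * y + 1) := by
  induction N with
  | zero => simp
  | succ N ih =>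
    have : 2 * (N + 1) = (2 * N + 1) + 1 := by ring
    rw [this, Finset.sum_range_succ, Finset.sum_range_succ, Finset.sum_range_succ,
      Finset.sum_range_succ, ih]
    abel

end

lemma Gsum_eq (S : ℤ) (k : ℕ) :
    Gsum S (2^k) = ∑ x ∈ range (2^k), Eexp k (S * (x:ℤ)^2) := by
  unfold Gsum Eexp
  apply Finset.sum_congr rfl
  intro x _
  congr 2
  push_cast
  ring

lemma sum_eq_zero_of_neg {x : ℂ} (h : x = -x) : x = 0 := by
  have : (2:ℂ) * x = 0 := by linear_combination h
  simpa using this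

lemma G_step (S : ℤ) (hS : Odd S) (m : ℕ) (hm : 4 ≤ m) :
    Gsum S (2^m) = 2 * Gsum S (2^(m-2)) := by
  obtain ⟨j, rfl⟩ : ∃ j, m = j + 4 := ⟨m - 4, by omega⟩
  have hm2 : j + 4 - 2 = j + 2 := by omega
  rw [hm2, Gsum_eq, Gsum_eq]
  have h2m : (2:ℕ)^(j+4) = 2 * 2^(j+3) := by ring
  rw [h2m, sum_range_two_mul]
  have heven : ∑ y ∈ range (2^(j+3)), Eexp (j+4) (S * ((2*y : ℕ):ℤ)^2)
      = 2 * ∑ x ∈ range (2^(j+2)), Eexp (j+2) (S * (x:ℤ)^2) := by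
    have e4 : ∀ y : ℕ, Eexp (j+4) (S * ((2*y : ℕ):ℤ)^2) = Eexp (j+2) (S * (y:ℤ)^2) := by
      intro y
      rw [show (S * ((2*y : ℕ):ℤ)^2) = 2^2 * (S * (y:ℤ)^2) by push_cast; ring,
        Eexp_pow_shift (j+2) 2]
    rw [Finset.sum_congr rfl (fun y _ => e4 y)]
    have hfold := sum_fold (fun x => Eexp (j+2) (S * (x:ℤ)^2)) (2^(j+2))
      (fun t => Eexp_congr ⟨S*(2*t+2^(j+2)), by push_cast; ring⟩) 2
    rw [show (2:ℕ)^(j+3) = 2 * 2^(j+2) by ring, hfold]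
    simp
  have hodd : ∑ y ∈ range (2^(j+3)), Eexp (j+4) (S * ((2*y+1 : ℕ):ℤ)^2) = 0 := by
    set h : ℕ → ℂ := fun y => Eexp (j+4) (S * ((2*y+1 : ℕ):ℤ)^2) with hh
    have hper : ∀ t, h (t + 2^(j+3)) = h t := by
      intro t
      apply Eexp_congr
      exact ⟨S*(2*(2*t+1)+2^(j+4)), by push_cast; ring⟩
    have hneg : ∀ y, h (y + 2^(j+1)) = - h y := by
      intro y
      have key : (S * ((2*(y + 2^(j+1))+1 : ℕ):ℤ)^2)
          = 2^(j+4) * (S * 2^j) + (2^(j+3) * (S*(2*y+1)) + S * ((2*y+1 : ℕ):ℤ)^2) := by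
        push_cast; ring
      rw [hh]
      simp only []
      rw [key, Eexp_add, Eexp_add, Eexp_pow_mul, one_mul]
      have h12 : Eexp (j+4) (2^(j+3) * (S*(2*(y:ℤ)+1))) = -1 :=
        Eexp_half' (j+4) (j+3) rfl (hS.mul ⟨y, by ring⟩)
      rw [h12]
      ring
    apply sum_eq_zero_of_neg
    calc ∑ y ∈ range (2^(j+3)), h y = ∑ y ∈ range (2^(j+3)), h (y + 2^(j+1)) :=
          (sum_shift h (2^(j+3)) hper (2^(j+1))).symm
      _ = ∑ y ∈ range (2^(j+3)), (- h y) := Finset.sum_congr rfl (fun y _ => hneg y)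
      _ = - ∑ y ∈ range (2^(j+3)), h y := by rw [Finset.sum_neg_distrib]
  rw [heven, hodd, add_zero]

lemma G_iter (S : ℤ) (hS : Odd S) (a m : ℕ) (hm : 2*a + 2 ≤ m) :
    Gsum S (2^m) = (2:ℂ)^a * Gsum S (2^(m - 2*a)) := by
  induction a generalizing m with
  | zero => simp
  | succ a ih =>
    have h4 : 4 ≤ m := by omega
    rw [G_step S hS m h4, ih (m-2) (by omega)]
    rw [show m - 2 - 2*a = m - 2*(a+1) by omega]
    ring

lemma filter_eq_image (α δ : ℕ) (w : ℤ) :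
    (Finset.range (2^(α+δ))).filter (fun x : ℕ => (x : ℤ) % (2:ℤ)^α = w % (2:ℤ)^α)
      = (Finset.range (2^δ)).image (fun t => (w % (2:ℤ)^α).toNat + 2^α * t) := by
  have hpos : (0:ℤ) < 2^α := by positivity
  have hrnn : 0 ≤ w % (2:ℤ)^α := Int.emod_nonneg w (by positivity)
  have hrlt : w % (2:ℤ)^α < 2^α := Int.emod_lt_of_pos w hpos
  have hcast : ((2^α : ℕ) : ℤ) = (2:ℤ)^α := by push_cast; ring
  ext x
  simp only [mem_filter, mem_range, mem_image]
  constructor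
  · rintro ⟨hx, hmod⟩
    refine ⟨x / 2^α, ?_, ?_⟩
    · rw [pow_add] at hx
      exact Nat.div_lt_of_lt_mul (by omega)
    · have h1 : ((x % 2^α : ℕ) : ℤ) = w % (2:ℤ)^α := by
        push_cast; exact hmod
      have h2 := Nat.div_add_mod x (2^α)
      omega
  · rintro ⟨t, ht, rfl⟩
    have hrval : (((w % (2:ℤ)^α).toNat : ℕ) : ℤ) = w % (2:ℤ)^α := Int.toNat_of_nonneg hrnn
    constructor
    · have h1 : (w % (2:ℤ)^α).toNat < 2^α := by omega
      have h2 : 2^α * t + 2^α ≤ 2^α * 2^δ := by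
        have : t + 1 ≤ 2^δ := ht
        calc 2^α * t + 2^α = 2^α * (t+1) := by ring
          _ ≤ 2^α * 2^δ := Nat.mul_le_mul_left _ this
      rw [pow_add]
      omega
    · push_cast [hrval]
      rw [Int.add_mul_emod_self_left, Int.emod_emod_of_dvd w dvd_rfl]

lemma odd_aux (S : ℤ) (hS : Odd S) (r' d : ℕ) (hr' : Odd r') (t : ℕ) :
    Odd (S * ((r' : ℤ) + 2^(d+1) * (t : ℤ))) := by
  have h1 : Odd (r' : ℤ) := by exact_mod_cast hr'
  have h2 : Even ((2:ℤ)^(d+1) * t) := ⟨2^d * t, by ring⟩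
  exact hS.mul (h1.add_even h2)

lemma case1_aux (S : ℤ) (hS : Odd S) (γ d β e r' : ℕ) (hr' : Odd r') :
    ∑ t ∈ range (2^(γ+d+β+3+e)),
      Eexp (2*γ+2*d+β+4+e) (S*2^β*((2^γ*(r':ℤ)) + 2^(γ+1+d)*(t:ℤ))^2) = 0 := by
  set g : ℕ → ℂ :=
    fun t => Eexp (2*γ+2*d+β+4+e) (S*2^β*((2^γ*(r':ℤ)) + 2^(γ+1+d)*(t:ℤ))^2) with hg
  have hper : ∀ t, g (t + 2^(γ+d+β+3+e)) = g t := by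
    intro t
    apply Eexp_congr
    refine ⟨S*2^β*2*((2^γ*(r':ℤ)) + 2^(γ+1+d)*t) + 2^(2*γ+2*d+β+4+e)*(S*2^β), ?_⟩
    push_cast
    ring
  have hneg : ∀ t, g (t + 2^(d+1+e)) = - g t := by
    intro t
    have key : S*2^β*((2^γ*(r':ℤ)) + 2^(γ+1+d)*(((t + 2^(d+1+e) : ℕ)):ℤ))^2
        = 2^(2*γ+2*d+β+4+e) * (S*2^(2*d+e))
          + (2^(2*γ+2*d+β+3+e) * (S*((r':ℤ)+2^(d+1)*(t:ℤ)))
            + S*2^β*((2^γ*(r':ℤ)) + 2^(γ+1+d)*(t:ℤ))^2) := by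
      push_cast
      ring
    rw [hg]
    simp only []
    rw [key, Eexp_add, Eexp_add, Eexp_pow_mul, one_mul,
      Eexp_half' (2*γ+2*d+β+4+e) (2*γ+2*d+β+3+e) (by omega) (odd_aux S hS r' d hr' t)]
    ring
  apply sum_eq_zero_of_neg
  calc ∑ t ∈ range (2^(γ+d+β+3+e)), g t
      = ∑ t ∈ range (2^(γ+d+β+3+e)), g (t + 2^(d+1+e)) :=
        (sum_shift g _ hper _).symm
    _ = ∑ t ∈ range (2^(γ+d+β+3+e)), (- g t) := Finset.sum_congr rfl (fun t _ => hneg t)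
    _ = - ∑ t ∈ range (2^(γ+d+β+3+e)), g t := by rw [Finset.sum_neg_distrib]

theorem stmt_9 (n : ℕ) (hn : 0 < n) (S : ℤ) (hS : Odd S) (w : ℤ)
    (α β : ℕ) (hα : α ≤ n) (hβ : β ≤ n) (h : 2 * α + β + 2 ≤ n) :
    (¬ (2 : ℤ) ^ α ∣ w →
      ∑ x ∈ (Finset.range (2 ^ n)).filter (fun x : ℕ => (x : ℤ) % (2 : ℤ) ^ α = w % (2 : ℤ) ^ α),
          Complex.exp (2 * Real.pi * Complex.I *
            ((S * 2 ^ β * (x : ℤ) ^ 2 : ℤ) : ℂ) / ((2 : ℂ) ^ n)) = 0) ∧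
    ((2 : ℤ) ^ α ∣ w →
      ∑ x ∈ (Finset.range (2 ^ n)).filter (fun x : ℕ => (x : ℤ) % (2 : ℤ) ^ α = w % (2 : ℤ) ^ α),
          Complex.exp (2 * Real.pi * Complex.I *
            ((S * 2 ^ β * (x : ℤ) ^ 2 : ℤ) : ℂ) / ((2 : ℂ) ^ n)) =
        (2 : ℂ) ^ β * Gsum S (2 ^ (n - β))) := by
  -- set up the reindexing
  set r : ℕ := (w % (2:ℤ)^α).toNat with hr
  have hpos : (0:ℤ) < 2^α := by positivity
  have hrnn : 0 ≤ w % (2:ℤ)^α := Int.emod_nonneg w (by positivity)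
  have hrlt : w % (2:ℤ)^α < 2^α := Int.emod_lt_of_pos w hpos
  have hrval : ((r : ℕ) : ℤ) = w % (2:ℤ)^α := Int.toNat_of_nonneg hrnn
  obtain ⟨δ, hδ⟩ : ∃ δ, n = α + δ := ⟨n - α, by omega⟩
  have hinj : ∀ a ∈ range (2^δ), ∀ b ∈ range (2^δ),
      r + 2^α * a = r + 2^α * b → a = b := by
    intro a _ b _ hab
    have h2 : (0:ℕ) < 2^α := Nat.pow_pos (by omega)
    exact Nat.eq_of_mul_eq_mul_left h2 (by omega)
  have hsum : ∀ F : ℕ → ℂ,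
      ∑ x ∈ (Finset.range (2 ^ n)).filter
          (fun x : ℕ => (x : ℤ) % (2 : ℤ) ^ α = w % (2 : ℤ) ^ α), F x
        = ∑ t ∈ range (2^δ), F (r + 2^α * t) := by
    intro F
    rw [hδ, filter_eq_image α δ w, Finset.sum_image hinj]
  constructor
  · -- case 2^α ∤ w
    intro hw
    rw [hsum (fun x : ℕ => Complex.exp (2 * Real.pi * Complex.I *
      ((S * 2 ^ β * (x : ℤ) ^ 2 : ℤ) : ℂ) / ((2 : ℂ) ^ n)))]
    have hcast : ((2^α : ℕ) : ℤ) = (2:ℤ)^α := by push_cast; ring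
    have hrne : r ≠ 0 := by
      intro h0
      apply hw
      apply Int.dvd_of_emod_eq_zero
      omega
    obtain ⟨γ, r', hr'2, hrfact⟩ := Nat.exists_eq_pow_mul_and_not_dvd hrne 2 (by norm_num)
    have hr'odd : Odd r' := Nat.odd_iff.mpr (by omega)
    have hr'pos : 0 < r' := by
      rcases Nat.eq_zero_or_pos r' with h0 | h0
      · exfalso; apply hrne; rw [hrfact, h0, mul_zero]
      · exact h0
    have hγα : γ < α := by
      by_contra hge
      push_neg at hge
      have h1 : 2^α ≤ 2^γ := Nat.pow_le_pow_right (by omega) hge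
      have h2 : 2^γ ≤ 2^γ * r' := Nat.le_mul_of_pos_right _ hr'pos
      have h3 : r < 2^α := by omega
      omega
    obtain ⟨d, hd⟩ : ∃ d, α = γ + 1 + d := ⟨α - γ - 1, by omega⟩
    obtain ⟨e, he⟩ : ∃ e, n = 2*α + β + 2 + e := ⟨n - (2*α+β+2), by omega⟩
    calc ∑ t ∈ range (2^δ), Complex.exp (2 * Real.pi * Complex.I *
          ((S * 2 ^ β * ((r + 2^α*t : ℕ) : ℤ) ^ 2 : ℤ) : ℂ) / ((2 : ℂ) ^ n))
        = ∑ t ∈ range (2^(γ+d+β+3+e)),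
            Eexp (2*γ+2*d+β+4+e) (S*2^β*((2^γ*(r':ℤ)) + 2^(γ+1+d)*(t:ℤ))^2) := by
          rw [show (2:ℕ)^δ = 2^(γ+d+β+3+e) by congr 1; omega]
          apply Finset.sum_congr rfl
          intro t _
          show Eexp n (S * 2 ^ β * ((r + 2^α*t : ℕ) : ℤ) ^ 2) = _
          rw [show n = 2*γ+2*d+β+4+e by omega]
          congr 1
          rw [hrfact, hd]
          push_cast
          ring
      _ = 0 := case1_aux S hS γ d β e r' hr'odd
  · -- case 2^α ∣ w
    intro hw
    rw [hsum (fun x : ℕ => Complex.exp (2 * Real.pi * Complex.I *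
      ((S * 2 ^ β * (x : ℤ) ^ 2 : ℤ) : ℂ) / ((2 : ℂ) ^ n)))]
    have hw0 : w % (2:ℤ)^α = 0 := Int.emod_eq_zero_of_dvd hw
    have hr0 : r = 0 := by omega
    obtain ⟨e, he⟩ : ∃ e, n = 2*α + β + 2 + e := ⟨n - (2*α+β+2), by omega⟩
    have hterm : ∀ t : ℕ, Complex.exp (2 * Real.pi * Complex.I *
          ((S * 2 ^ β * ((r + 2^α*t : ℕ) : ℤ) ^ 2 : ℤ) : ℂ) / ((2 : ℂ) ^ n))
        = Eexp (e+2) (S * (t:ℤ)^2) := by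
      intro t
      show Eexp n (S * 2 ^ β * ((r + 2^α*t : ℕ) : ℤ) ^ 2) = _
      have harg : (S * 2 ^ β * ((r + 2^α*t : ℕ) : ℤ) ^ 2) = 2^(β+2*α) * (S * (t:ℤ)^2) := by
        rw [hr0]
        push_cast
        ring
      rw [harg, show n = (e+2) + (β+2*α) by omega, Eexp_pow_shift]
    rw [Finset.sum_congr rfl (fun t _ => hterm t)]
    have hfold := sum_fold (fun t : ℕ => Eexp (e+2) (S * (t:ℤ)^2)) (2^(e+2))
      (fun t => Eexp_congr ⟨S*(2*t+2^(e+2)), by push_cast; ring⟩) (2^(α+β))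
    rw [show (2:ℕ)^δ = 2^(α+β) * 2^(e+2) by rw [← pow_add]; congr 1; omega, hfold,
      G_iter S hS α (n-β) (by omega), show (n-β) - 2*α = e+2 by omega, ← Gsum_eq]
    rw [nsmul_eq_mul]
    push_cast
    ring
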